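/- arXiv:1307.4029 — 2 statements merged into one kernel-verified Lean document; each statement's English description precedes it below -/
import Mathlib

section
/- Let I_B and I_C be NA-homogeneous toric ideals with simple columns (b^α_β; c^α_γ). A Graver generator M̄^g_{β,γ} is a product of simple generators if and only if the Graver column m^g_{β,γ} = (b^g_β; c^g_γ) is a non-negative integral combination of the simple columns. -/
open MvPolynomial
open scoped TensorProduct Classical

noncomputable section

variable {K : Type*} [Field K] {d h : ℕ}

/-- The map `φ_S : K[z] → K[x] ⊗ K[y]`, `z^α_{β,γ} ↦ x^α_β ⊗ y^α_γ`. -/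
def phiS (K : Type*) [Field K] (dx dy : Fin d → ℕ) :
    MvPolynomial (Σ α : Fin d, Fin (dx α) × Fin (dy α)) K →ₐ[K]
      (MvPolynomial (Σ α : Fin d, Fin (dx α)) K ⊗[K]
        MvPolynomial (Σ α : Fin d, Fin (dy α)) K) :=
  aeval (fun s => (X ⟨s.1, s.2.1⟩ : MvPolynomial (Σ α : Fin d, Fin (dx α)) K) ⊗ₜ[K]
    (X ⟨s.1, s.2.2⟩ : MvPolynomial (Σ α : Fin d, Fin (dy α)) K))

/-- The composite map `(π_I ⊗ π_J) ∘ φ_S : K[z] → R ⊗ S`. -/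
def psiTFP (K : Type*) [Field K] (dx dy : Fin d → ℕ)
    (I : Ideal (MvPolynomial (Σ α : Fin d, Fin (dx α)) K))
    (J : Ideal (MvPolynomial (Σ α : Fin d, Fin (dy α)) K)) :
    MvPolynomial (Σ α : Fin d, Fin (dx α) × Fin (dy α)) K →ₐ[K]
      ((MvPolynomial (Σ α : Fin d, Fin (dx α)) K ⧸ I) ⊗[K]
        (MvPolynomial (Σ α : Fin d, Fin (dy α)) K ⧸ J)) :=
  (Algebra.TensorProduct.map (Ideal.Quotient.mkₐ K I) (Ideal.Quotient.mkₐ K J)).comp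
    (phiS K dx dy)

/-- The toric fiber product `I ×_A J = ker((π_I ⊗ π_J) ∘ φ_S)`. -/
def TFP (K : Type*) [Field K] (dx dy : Fin d → ℕ)
    (I : Ideal (MvPolynomial (Σ α : Fin d, Fin (dx α)) K))
    (J : Ideal (MvPolynomial (Σ α : Fin d, Fin (dy α)) K)) :
    Ideal (MvPolynomial (Σ α : Fin d, Fin (dx α) × Fin (dy α)) K) :=
  RingHom.ker (psiTFP K dx dy I J).toRingHom


/-- The toric ideal of a vector configuration `D : σ → V`. -/
def toricIdeal (K : Type*) [Field K] {σ V : Type*} [Fintype σ] [AddCommGroup V]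
    (D : σ → V) : Ideal (MvPolynomial σ K) :=
  Ideal.span {p | ∃ u v : σ →₀ ℕ, (∑ s, ((u s : ℤ) - (v s : ℤ)) • D s) = 0 ∧
    p = monomial u 1 - monomial v 1}

/-- The integer kernel of the configuration `a`. -/
def kerA (a : Fin d → Fin h → ℤ) : Set (Fin d → ℤ) :=
  {c | ∑ α, c α • a α = 0}

/-- `u` is sign-consistent with `c` if `u α * c α ≥ 0` for all `α`. -/
def SignConsistent (u c : Fin d → ℤ) : Prop := ∀ α, 0 ≤ u α * c α

/-- A Graver basis element: a primitive element of the kernel. -/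
def IsPrimitive (a : Fin d → Fin h → ℤ) (c : Fin d → ℤ) : Prop :=
  c ∈ kerA a ∧ c ≠ 0 ∧
    ¬ ∃ u v : Fin d → ℤ, u ∈ kerA a ∧ v ∈ kerA a ∧ u ≠ 0 ∧ v ≠ 0 ∧
      SignConsistent u c ∧ SignConsistent v c ∧ c = u + v

variable {h1 h2 : ℕ} {dx dy : Fin d → ℕ}

/-- The Graver generator `M̄^g_{β,γ}`, the image of the Graver monomial in
`K[ℕB] ⊗ K[ℕC]`, encoded by the exponent vectors `mx`, `my` of its two factors. -/
def graverGen (K : Type*) [Field K] (b : (α : Fin d) → Fin (dx α) → Fin h1 → ℤ)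
    (c : (α : Fin d) → Fin (dy α) → Fin h2 → ℤ)
    (mx : (Σ α : Fin d, Fin (dx α)) →₀ ℕ) (my : (Σ α : Fin d, Fin (dy α)) →₀ ℕ) :
    (MvPolynomial (Σ α : Fin d, Fin (dx α)) K ⧸
        toricIdeal K (fun s : Σ α : Fin d, Fin (dx α) => b s.1 s.2)) ⊗[K]
      (MvPolynomial (Σ α : Fin d, Fin (dy α)) K ⧸
        toricIdeal K (fun s : Σ α : Fin d, Fin (dy α) => c s.1 s.2)) :=
  (Ideal.Quotient.mk _ (monomial mx 1)) ⊗ₜ[K] (Ideal.Quotient.mk _ (monomial my 1))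

/-- The simple column `(b^α_β ; c^α_γ)` indexed by `s = (α, (β, γ))`. -/
def simpleCol (b : (α : Fin d) → Fin (dx α) → Fin h1 → ℤ)
    (c : (α : Fin d) → Fin (dy α) → Fin h2 → ℤ)
    (s : Σ α : Fin d, Fin (dx α) × Fin (dy α)) : (Fin h1 → ℤ) × (Fin h2 → ℤ) :=
  (b s.1 s.2.1, c s.1 s.2.2)

/-- The Graver column `m^g_{β,γ} = (b^g_β ; c^g_γ)`. -/
def graverCol (b : (α : Fin d) → Fin (dx α) → Fin h1 → ℤ)
    (c : (α : Fin d) → Fin (dy α) → Fin h2 → ℤ)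
    (mx : (Σ α : Fin d, Fin (dx α)) →₀ ℕ) (my : (Σ α : Fin d, Fin (dy α)) →₀ ℕ) :
    (Fin h1 → ℤ) × (Fin h2 → ℤ) :=
  (∑ s, mx s • b s.1 s.2, ∑ s, my s • c s.1 s.2)

/-! ### Auxiliary machinery -/

section Aux

variable {σ τ : Type*} {V W : Type*} [AddCommGroup V] [AddCommGroup W]

lemma colSum_eq [Fintype σ] (D : σ → V) (u : σ →₀ ℕ) :
    ∑ s, u s • D s = u.sum fun s k => k • D s := by
  rw [Finsupp.sum_fintype]
  exact fun s => zero_smul ℕ (D s)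

lemma colSum_mapDomain {σ τ : Type*} [Fintype σ] [Fintype τ]
    (f : σ → τ) (D : τ → V) (u : σ →₀ ℕ) :
    ∑ t, (u.mapDomain f) t • D t = ∑ s, u s • D (f s) := by
  rw [colSum_eq, Finsupp.sum_mapDomain_index (fun t => zero_smul ℕ (D t))
    (fun t k₁ k₂ => add_smul k₁ k₂ (D t))]
  exact (colSum_eq (fun s => D (f s)) u).symm

lemma int_cond [Fintype σ] (D : σ → V) (u v : σ →₀ ℕ)
    (h0 : (∑ s, ((u s : ℤ) - (v s : ℤ)) • D s) = 0) :
    ∑ s, u s • D s = ∑ s, v s • D s := by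
  have h := h0
  simp only [sub_smul, Finset.sum_sub_distrib, sub_eq_zero, natCast_zsmul] at h
  exact h

lemma sum_pair_smul [Fintype σ] (f : σ → V) (g : σ → W) (w : σ → ℕ) :
    ∑ s, w s • ((f s, g s) : V × W) = (∑ s, w s • f s, ∑ s, w s • g s) := by
  refine Prod.ext ?_ ?_ <;> simp [Prod.fst_sum, Prod.snd_sum]

/-- The degree algebra map `K[x] → K[V]`, `x_s ↦ t^{E s}`. -/
def degHom (K : Type*) [Field K] (E : σ → W) :
    MvPolynomial σ K →ₐ[K] AddMonoidAlgebra K W :=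
  aeval fun s => (AddMonoidAlgebra.single (E s) 1 : AddMonoidAlgebra K W)

lemma degHom_monomial (K : Type*) [Field K] [Fintype σ] (E : σ → W) (u : σ →₀ ℕ) :
    degHom K E (monomial u 1) = AddMonoidAlgebra.single (∑ s, u s • E s) 1 := by
  rw [degHom, aeval_monomial, map_one, one_mul, Finsupp.prod]
  rw [Finset.prod_congr rfl (fun s _ => by
    rw [AddMonoidAlgebra.single_pow, one_pow] :
      ∀ s ∈ u.support, (AddMonoidAlgebra.single (E s) (1:K)) ^ (u s)
        = AddMonoidAlgebra.single (u s • E s) 1)]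
  rw [AddMonoidAlgebra.prod_single, Finset.prod_const_one]
  congr 1
  refine Finset.sum_subset (Finset.subset_univ _) ?_
  intro s _ hs
  rw [Finsupp.notMem_support_iff.mp hs, zero_smul]

lemma degHom_vanish (K : Type*) [Field K] [Fintype σ] (D : σ → V) (E : σ → W)
    (hDE : ∀ u v : σ →₀ ℕ, (∑ s, ((u s : ℤ) - (v s : ℤ)) • D s) = 0 →
      ∑ s, u s • E s = ∑ s, v s • E s) :
    ∀ p ∈ toricIdeal K D, degHom K E p = 0 := by
  intro p hp
  have hle : toricIdeal K D ≤ RingHom.ker (degHom K E).toRingHom := by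
    rw [toricIdeal, Ideal.span_le]
    rintro q ⟨u, v, h0, rfl⟩
    have : degHom K E (monomial u 1 - monomial v 1) = 0 := by
      rw [map_sub, degHom_monomial, degHom_monomial, hDE u v h0, sub_self]
    simpa [RingHom.mem_ker] using this
  simpa [RingHom.mem_ker] using hle hp

/-- The degree map lifted to the toric quotient. -/
def degQuot (K : Type*) [Field K] [Fintype σ] (D : σ → V) (E : σ → W)
    (hDE : ∀ u v : σ →₀ ℕ, (∑ s, ((u s : ℤ) - (v s : ℤ)) • D s) = 0 →
      ∑ s, u s • E s = ∑ s, v s • E s) :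
    (MvPolynomial σ K ⧸ toricIdeal K D) →ₐ[K] AddMonoidAlgebra K W :=
  Ideal.Quotient.liftₐ _ (degHom K E) (degHom_vanish K D E hDE)

lemma degQuot_mk (K : Type*) [Field K] [Fintype σ] (D : σ → V) (E : σ → W)
    (hDE : ∀ u v : σ →₀ ℕ, (∑ s, ((u s : ℤ) - (v s : ℤ)) • D s) = 0 →
      ∑ s, u s • E s = ∑ s, v s • E s) (p : MvPolynomial σ K) :
    degQuot K D E hDE (Ideal.Quotient.mk _ p) = degHom K E p := by
  rw [degQuot, Ideal.Quotient.liftₐ_apply]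
  rfl

lemma mk_monomial_eq (K : Type*) [Field K] [Fintype σ] (D : σ → V)
    (u v : σ →₀ ℕ) (huv : ∑ s, u s • D s = ∑ s, v s • D s) :
    Ideal.Quotient.mk (toricIdeal K D) (monomial u 1) =
      Ideal.Quotient.mk (toricIdeal K D) (monomial v 1) := by
  rw [Ideal.Quotient.eq]
  refine Ideal.subset_span ⟨u, v, ?_, rfl⟩
  simp only [sub_smul, Finset.sum_sub_distrib, sub_eq_zero, natCast_zsmul]
  exact huv

lemma prod_tmul {R A B : Type*} [CommSemiring R] [CommSemiring A] [CommSemiring B]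
    [Algebra R A] [Algebra R B] {ι : Type*} (t : Finset ι) (f : ι → A) (g : ι → B) :
    ∏ i ∈ t, (f i ⊗ₜ[R] g i) = (∏ i ∈ t, f i) ⊗ₜ[R] (∏ i ∈ t, g i) := by
  classical
  induction t using Finset.induction_on with
  | empty => simp [Algebra.TensorProduct.one_def]
  | insert _ _ h ih =>
      rw [Finset.prod_insert h, Finset.prod_insert h, Finset.prod_insert h, ih,
        Algebra.TensorProduct.tmul_mul_tmul]

lemma monomial_mapDomain {σ τ K : Type*} [Field K] (f : σ → τ) (u : σ →₀ ℕ) :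
    (monomial (u.mapDomain f) (1:K) : MvPolynomial τ K) =
      u.prod fun s k => X (f s) ^ k := by
  rw [monomial_eq, C_1, one_mul]
  exact Finsupp.prod_mapDomain_index (fun t => pow_zero _) (fun t k₁ k₂ => pow_add _ _ _)

end Aux

lemma phiS_monomial (K : Type*) [Field K] {d : ℕ} {dx dy : Fin d → ℕ}
    (mz : (Σ α : Fin d, Fin (dx α) × Fin (dy α)) →₀ ℕ) :
    phiS K dx dy (monomial mz 1) =
      (monomial (mz.mapDomain fun s => (⟨s.1, s.2.1⟩ : Σ α : Fin d, Fin (dx α))) 1) ⊗ₜ[K]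
        (monomial (mz.mapDomain fun s => (⟨s.1, s.2.2⟩ : Σ α : Fin d, Fin (dy α))) 1) := by
  rw [phiS, aeval_monomial, map_one, one_mul, monomial_mapDomain, monomial_mapDomain,
    Finsupp.prod, Finsupp.prod, Finsupp.prod, ← prod_tmul]
  exact Finset.prod_congr rfl fun s _ => Algebra.TensorProduct.tmul_pow _ _ _

/-- A Graver generator `M̄^g_{β,γ}` is a product of simple generators if and only if
the Graver column `m^g_{β,γ}` is a non-negative integral combination of the simple
columns. -/
theorem graverGen_product_of_simple_iff (K : Type*) [Field K] {h : ℕ}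
    (a : Fin d → Fin h → ℤ)
    (b : (α : Fin d) → Fin (dx α) → Fin h1 → ℤ)
    (c : (α : Fin d) → Fin (dy α) → Fin h2 → ℤ)
    (B : Matrix (Fin h) (Fin h1) ℤ) (C : Matrix (Fin h) (Fin h2) ℤ)
    (hb : ∀ (α : Fin d) (β : Fin (dx α)), B.mulVec (b α β) = a α)
    (hc : ∀ (α : Fin d) (γ : Fin (dy α)), C.mulVec (c α γ) = a α)
    (g : Fin d → ℤ) (hg : IsPrimitive a g)
    (mx : (Σ α : Fin d, Fin (dx α)) →₀ ℕ) (my : (Σ α : Fin d, Fin (dy α)) →₀ ℕ)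
    (hmx : ∀ α : Fin d, (∑ β : Fin (dx α), mx ⟨α, β⟩) = (g α).toNat)
    (hmy : ∀ α : Fin d, (∑ γ : Fin (dy α), my ⟨α, γ⟩) = (-(g α)).toNat) :
    (∃ mz : (Σ α : Fin d, Fin (dx α) × Fin (dy α)) →₀ ℕ,
        graverGen K b c mx my =
          psiTFP K dx dy (toricIdeal K (fun s : Σ α : Fin d, Fin (dx α) => b s.1 s.2))
            (toricIdeal K (fun s : Σ α : Fin d, Fin (dy α) => c s.1 s.2))
            (monomial mz 1)) ↔
      (∃ mz : (Σ α : Fin d, Fin (dx α) × Fin (dy α)) → ℕ,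
        graverCol b c mx my = ∑ s, mz s • simpleCol b c s) := by

  classical
  have hDE1 : ∀ u v : (Σ α : Fin d, Fin (dx α)) →₀ ℕ,
      (∑ s, ((u s : ℤ) - (v s : ℤ)) • (fun t : Σ α : Fin d, Fin (dx α) => b t.1 t.2) s) = 0 →
      ∑ s, u s • ((fun t : Σ α : Fin d, Fin (dx α) =>
          ((b t.1 t.2, 0) : (Fin h1 → ℤ) × (Fin h2 → ℤ))) s) =
        ∑ s, v s • ((fun t : Σ α : Fin d, Fin (dx α) =>
          ((b t.1 t.2, 0) : (Fin h1 → ℤ) × (Fin h2 → ℤ))) s) := by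
    intro u v h0
    have hcol := int_cond (fun t : Σ α : Fin d, Fin (dx α) => b t.1 t.2) u v h0
    rw [sum_pair_smul (fun t : Σ α : Fin d, Fin (dx α) => b t.1 t.2)
        (fun _ => (0 : Fin h2 → ℤ)) u,
      sum_pair_smul (fun t : Σ α : Fin d, Fin (dx α) => b t.1 t.2)
        (fun _ => (0 : Fin h2 → ℤ)) v]
    simp only [smul_zero, Finset.sum_const_zero, hcol]
  have hDE2 : ∀ u v : (Σ α : Fin d, Fin (dy α)) →₀ ℕ,
      (∑ s, ((u s : ℤ) - (v s : ℤ)) • (fun t : Σ α : Fin d, Fin (dy α) => c t.1 t.2) s) = 0 →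
      ∑ s, u s • ((fun t : Σ α : Fin d, Fin (dy α) =>
          (((0 : Fin h1 → ℤ), c t.1 t.2) : (Fin h1 → ℤ) × (Fin h2 → ℤ))) s) =
        ∑ s, v s • ((fun t : Σ α : Fin d, Fin (dy α) =>
          (((0 : Fin h1 → ℤ), c t.1 t.2) : (Fin h1 → ℤ) × (Fin h2 → ℤ))) s) := by
    intro u v h0
    have hcol := int_cond (fun t : Σ α : Fin d, Fin (dy α) => c t.1 t.2) u v h0
    rw [sum_pair_smul (fun _ => (0 : Fin h1 → ℤ))
        (fun t : Σ α : Fin d, Fin (dy α) => c t.1 t.2) u,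
      sum_pair_smul (fun _ => (0 : Fin h1 → ℤ))
        (fun t : Σ α : Fin d, Fin (dy α) => c t.1 t.2) v]
    simp only [smul_zero, Finset.sum_const_zero, hcol]
  constructor
  · rintro ⟨mz, hmz⟩
    refine ⟨fun s => mz s, ?_⟩
    set q1 := degQuot K (fun t : Σ α : Fin d, Fin (dx α) => b t.1 t.2)
      (fun t : Σ α : Fin d, Fin (dx α) => ((b t.1 t.2, 0) : (Fin h1 → ℤ) × (Fin h2 → ℤ)))
      hDE1 with hq1
    set q2 := degQuot K (fun t : Σ α : Fin d, Fin (dy α) => c t.1 t.2)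
      (fun t : Σ α : Fin d, Fin (dy α) => (((0 : Fin h1 → ℤ), c t.1 t.2) :
        (Fin h1 → ℤ) × (Fin h2 → ℤ))) hDE2 with hq2
    have happ := congrArg (Algebra.TensorProduct.productMap q1 q2) hmz
    rw [graverGen, psiTFP, AlgHom.comp_apply, phiS_monomial,
      Algebra.TensorProduct.map_tmul, Ideal.Quotient.mkₐ_eq_mk, Ideal.Quotient.mkₐ_eq_mk,
      Algebra.TensorProduct.productMap_apply_tmul,
      Algebra.TensorProduct.productMap_apply_tmul, hq1, hq2,
      degQuot_mk, degQuot_mk, degQuot_mk, degQuot_mk,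
      degHom_monomial, degHom_monomial, degHom_monomial, degHom_monomial,
      AddMonoidAlgebra.single_mul_single, AddMonoidAlgebra.single_mul_single,
      colSum_mapDomain, colSum_mapDomain, one_mul] at happ
    have hcols := (AddMonoidAlgebra.single_left_inj (one_ne_zero (α := K))).mp happ
    rw [sum_pair_smul (fun t : Σ α : Fin d, Fin (dx α) => b t.1 t.2)
        (fun _ => (0 : Fin h2 → ℤ)) mx,
      sum_pair_smul (fun _ => (0 : Fin h1 → ℤ))
        (fun t : Σ α : Fin d, Fin (dy α) => c t.1 t.2) my,
      sum_pair_smul (fun s : Σ α : Fin d, Fin (dx α) × Fin (dy α) => b s.1 s.2.1)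
        (fun _ => (0 : Fin h2 → ℤ)) mz,
      sum_pair_smul (fun _ => (0 : Fin h1 → ℤ))
        (fun s : Σ α : Fin d, Fin (dx α) × Fin (dy α) => c s.1 s.2.2) mz] at hcols
    simp only [smul_zero, Finset.sum_const_zero, Prod.mk_add_mk, add_zero, zero_add,
      Prod.mk.injEq] at hcols
    rw [graverCol]
    simp only [simpleCol]
    rw [sum_pair_smul (fun s : Σ α : Fin d, Fin (dx α) × Fin (dy α) => b s.1 s.2.1)
      (fun s : Σ α : Fin d, Fin (dx α) × Fin (dy α) => c s.1 s.2.2) (fun s => mz s)]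
    exact Prod.ext hcols.1 hcols.2
  · rintro ⟨mz, hmz⟩
    refine ⟨Finsupp.equivFunOnFinite.symm mz, ?_⟩
    rw [graverCol] at hmz
    simp only [simpleCol] at hmz
    rw [sum_pair_smul (fun s : Σ α : Fin d, Fin (dx α) × Fin (dy α) => b s.1 s.2.1)
      (fun s : Σ α : Fin d, Fin (dx α) × Fin (dy α) => c s.1 s.2.2) mz,
      Prod.mk.injEq] at hmz
    rw [psiTFP, AlgHom.comp_apply, phiS_monomial, Algebra.TensorProduct.map_tmul,
      Ideal.Quotient.mkₐ_eq_mk, Ideal.Quotient.mkₐ_eq_mk, graverGen]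
    refine congrArg₂ (fun p q => p ⊗ₜ[K] q) ?_ ?_
    · refine mk_monomial_eq K (fun t : Σ α : Fin d, Fin (dx α) => b t.1 t.2) mx _ ?_
      rw [colSum_mapDomain]
      exact hmz.1
    · refine mk_monomial_eq K (fun t : Σ α : Fin d, Fin (dy α) => c t.1 t.2) my _ ?_
      rw [colSum_mapDomain]
      exact hmz.2
end
end

section
/- In the setting of toric ideals I_B and I_C, if for a Graver basis element g and index sequence β there exists a Graver index sequence β′ for −g with b^g_β = b^{−g}_{β′}, then for every γ the Graver generator M̄^g_{β,γ} is a product of simple generators. -/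
open MvPolynomial
open scoped TensorProduct Classical

noncomputable section

variable {K : Type*} [Field K] {d h : ℕ}

variable {h1 h2 : ℕ} {dx dy : Fin d → ℕ}

/-- transport lemma -/
lemma exists_marginal {X Y : Type*} [Fintype X] [Fintype Y] [DecidableEq X] [DecidableEq Y] :
    ∀ (n : ℕ) (u : X → ℕ) (v : Y → ℕ), (∑ x, u x) = n → (∑ y, v y) = n →
    ∃ w : X → Y → ℕ, (∀ x, ∑ y, w x y = u x) ∧ (∀ y, ∑ x, w x y = v y) := by
  intro n
  induction n with
  | zero =>
    intro u v hu hv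
    refine ⟨fun _ _ => 0, fun x => ?_, fun y => ?_⟩
    · have := Finset.sum_eq_zero_iff.mp hu x (Finset.mem_univ x)
      simp [this]
    · have := Finset.sum_eq_zero_iff.mp hv y (Finset.mem_univ y)
      simp [this]
  | succ n ih =>
    intro u v hu hv
    have hx : ∃ x0, u x0 ≠ 0 := by
      by_contra hcon
      push_neg at hcon
      simp [hcon] at hu
    have hy : ∃ y0, v y0 ≠ 0 := by
      by_contra hcon
      push_neg at hcon
      simp [hcon] at hv
    obtain ⟨x0, hx0⟩ := hx
    obtain ⟨y0, hy0⟩ := hy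
    set u' : X → ℕ := fun x => if x = x0 then u x0 - 1 else u x with hu'def
    set v' : Y → ℕ := fun y => if y = y0 then v y0 - 1 else v y with hv'def
    have hsu : (∑ x, u' x) = n := by
      have h1 : (∑ x, u x) = u x0 + ∑ x ∈ Finset.univ.erase x0, u x :=
        (Finset.add_sum_erase _ u (Finset.mem_univ x0)).symm
      have h2 : (∑ x, u' x) = u' x0 + ∑ x ∈ Finset.univ.erase x0, u' x :=
        (Finset.add_sum_erase _ u' (Finset.mem_univ x0)).symm
      have h3 : ∑ x ∈ Finset.univ.erase x0, u' x = ∑ x ∈ Finset.univ.erase x0, u x := by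
        refine Finset.sum_congr rfl fun x hxm => ?_
        simp [hu'def, Finset.ne_of_mem_erase hxm]
      rw [h1] at hu
      rw [h2, h3]
      simp only [hu'def, if_pos rfl]
      omega
    have hsv : (∑ y, v' y) = n := by
      have h1 : (∑ y, v y) = v y0 + ∑ y ∈ Finset.univ.erase y0, v y :=
        (Finset.add_sum_erase _ v (Finset.mem_univ y0)).symm
      have h2 : (∑ y, v' y) = v' y0 + ∑ y ∈ Finset.univ.erase y0, v' y :=
        (Finset.add_sum_erase _ v' (Finset.mem_univ y0)).symm
      have h3 : ∑ y ∈ Finset.univ.erase y0, v' y = ∑ y ∈ Finset.univ.erase y0, v y := by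
        refine Finset.sum_congr rfl fun y hym => ?_
        simp [hv'def, Finset.ne_of_mem_erase hym]
      rw [h1] at hv
      rw [h2, h3]
      simp only [hv'def, if_pos rfl]
      omega
    obtain ⟨w', hw1, hw2⟩ := ih u' v' hsu hsv
    refine ⟨fun x y => w' x y + (if x = x0 then if y = y0 then 1 else 0 else 0),
      fun x => ?_, fun y => ?_⟩
    · rw [Finset.sum_add_distrib, hw1]
      have heq : (∑ y, if x = x0 then if y = y0 then 1 else 0 else 0)
          = if x = x0 then 1 else 0 := by
        by_cases hxx : x = x0 <;> simp [hxx]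
      rw [heq]
      by_cases hxx : x = x0 <;> simp [hxx, hu'def] <;> omega
    · rw [Finset.sum_add_distrib, hw2]
      have heq : (∑ x, if x = x0 then if y = y0 then 1 else 0 else 0)
          = if y = y0 then 1 else 0 := by
        by_cases hyy : y = y0 <;> simp [hyy]
      rw [heq]
      by_cases hyy : y = y0 <;> simp [hyy, hv'def] <;> omega

lemma prod_X_pow_eq_monomial' {σ τ K : Type*} [CommSemiring K] [Fintype σ] [DecidableEq τ]
    (p : σ → τ) (m : σ → ℕ) :
    (∏ s, (X (p s) : MvPolynomial τ K) ^ m s) =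
      monomial (∑ s, Finsupp.single (p s) (m s)) 1 := by
  classical
  have : ∀ F : Finset σ, (∏ s ∈ F, (X (p s) : MvPolynomial τ K) ^ m s) =
      monomial (∑ s ∈ F, Finsupp.single (p s) (m s)) 1 := by
    intro F
    induction F using Finset.induction_on with
    | empty => simp
    | insert _ _ hns ih =>
      rw [Finset.prod_insert hns, Finset.sum_insert hns, ih, X_pow_eq_monomial,
        monomial_mul, one_mul]
  exact this Finset.univ

lemma tmul_prod_eq {R A B ι : Type*} [CommSemiring R] [CommSemiring A] [CommSemiring B]
    [Algebra R A] [Algebra R B] (F : Finset ι) (f : ι → A) (g : ι → B) :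
    (∏ s ∈ F, (f s ⊗ₜ[R] g s)) = (∏ s ∈ F, f s) ⊗ₜ[R] (∏ s ∈ F, g s) := by
  classical
  induction F using Finset.induction_on with
  | empty => simp [Algebra.TensorProduct.one_def]
  | insert _ _ hns ih =>
    rw [Finset.prod_insert hns, Finset.prod_insert hns, Finset.prod_insert hns, ih,
      Algebra.TensorProduct.tmul_mul_tmul]

/-- If there is a Graver index sequence `β'` for `−g` with `b^g_β = b^{−g}_{β'}`, then
for every `γ` the Graver generator `M̄^g_{β,γ}` is a product of simple generators. -/
theorem graverGen_product_of_simple_of_symmetric (K : Type*) [Field K] {h : ℕ}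
    (a : Fin d → Fin h → ℤ)
    (b : (α : Fin d) → Fin (dx α) → Fin h1 → ℤ)
    (c : (α : Fin d) → Fin (dy α) → Fin h2 → ℤ)
    (B : Matrix (Fin h) (Fin h1) ℤ) (C : Matrix (Fin h) (Fin h2) ℤ)
    (hb : ∀ (α : Fin d) (β : Fin (dx α)), B.mulVec (b α β) = a α)
    (hc : ∀ (α : Fin d) (γ : Fin (dy α)), C.mulVec (c α γ) = a α)
    (g : Fin d → ℤ) (hg : IsPrimitive a g)
    (mx : (Σ α : Fin d, Fin (dx α)) →₀ ℕ)
    (hmx : ∀ α : Fin d, (∑ β : Fin (dx α), mx ⟨α, β⟩) = (g α).toNat)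
    (hsym : ∃ mx' : (Σ α : Fin d, Fin (dx α)) →₀ ℕ,
      (∀ α : Fin d, (∑ β : Fin (dx α), mx' ⟨α, β⟩) = (-(g α)).toNat) ∧
      (∑ s, mx' s • b s.1 s.2) = (∑ s, mx s • b s.1 s.2)) :
    ∀ my : (Σ α : Fin d, Fin (dy α)) →₀ ℕ,
      (∀ α : Fin d, (∑ γ : Fin (dy α), my ⟨α, γ⟩) = (-(g α)).toNat) →
      ∃ mz : (Σ α : Fin d, Fin (dx α) × Fin (dy α)) →₀ ℕ,
        graverGen K b c mx my =
          psiTFP K dx dy (toricIdeal K (fun s : Σ α : Fin d, Fin (dx α) => b s.1 s.2))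
            (toricIdeal K (fun s : Σ α : Fin d, Fin (dy α) => c s.1 s.2))
            (monomial mz 1) := by

  intro my hmy
  obtain ⟨mx', hmx', hbeq⟩ := hsym
  have hW : ∀ α : Fin d, ∃ w : Fin (dx α) → Fin (dy α) → ℕ,
      (∀ β, ∑ γ, w β γ = mx' ⟨α, β⟩) ∧ (∀ γ, ∑ β, w β γ = my ⟨α, γ⟩) :=
    fun α => exists_marginal ((-(g α)).toNat) _ _ (hmx' α) (hmy α)
  choose w hw1 hw2 using hW
  set mz : (Σ α : Fin d, Fin (dx α) × Fin (dy α)) →₀ ℕ :=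
    Finsupp.equivFunOnFinite.symm (fun s => w s.1 s.2.1 s.2.2) with hmzdef
  have hmz : ∀ s, mz s = w s.1 s.2.1 s.2.2 := fun s => rfl
  -- marginals
  have hxmarg : (∑ s : (Σ α : Fin d, Fin (dx α) × Fin (dy α)),
      Finsupp.single (⟨s.1, s.2.1⟩ : Σ α : Fin d, Fin (dx α)) (mz s)) = mx' := by
    ext t
    obtain ⟨α, β⟩ := t
    rw [Finsupp.finset_sum_apply]
    rw [← Finset.univ_sigma_univ, Finset.sum_sigma]
    rw [Finset.sum_eq_single_of_mem α (Finset.mem_univ α)]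
    · rw [Fintype.sum_prod_type]
      have : ∀ β' : Fin (dx α), (∑ γ' : Fin (dy α),
          (Finsupp.single (⟨α, β'⟩ : Σ α : Fin d, Fin (dx α))
            (mz ⟨α, (β', γ')⟩)) ⟨α, β⟩) =
          if β' = β then ∑ γ' : Fin (dy α), w α β' γ' else 0 := by
        intro β'
        by_cases hb' : β' = β
        · subst hb'
          simp [Finsupp.single_apply, hmz]
        · simp [Finsupp.single_apply, Sigma.mk.inj_iff, hb']
      rw [Finset.sum_congr rfl fun β' _ => this β']
      simp [hw1 α β]
    · intro α' _ hne
      apply Finset.sum_eq_zero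
      intro p _
      rw [Finsupp.single_apply, if_neg]
      intro hcon
      exact hne (congrArg Sigma.fst hcon)
  have hymarg : (∑ s : (Σ α : Fin d, Fin (dx α) × Fin (dy α)),
      Finsupp.single (⟨s.1, s.2.2⟩ : Σ α : Fin d, Fin (dy α)) (mz s)) = my := by
    ext t
    obtain ⟨α, γ⟩ := t
    rw [Finsupp.finset_sum_apply]
    rw [← Finset.univ_sigma_univ, Finset.sum_sigma]
    rw [Finset.sum_eq_single_of_mem α (Finset.mem_univ α)]
    · rw [Fintype.sum_prod_type]
      have : ∀ β' : Fin (dx α), (∑ γ' : Fin (dy α),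
          (Finsupp.single (⟨α, γ'⟩ : Σ α : Fin d, Fin (dy α))
            (mz ⟨α, (β', γ')⟩)) ⟨α, γ⟩) = w α β' γ := by
        intro β'
        simp [Finsupp.single_apply, hmz]
      rw [Finset.sum_congr rfl fun β' _ => this β']
      simp [hw2 α γ]
    · intro α' _ hne
      apply Finset.sum_eq_zero
      intro p _
      rw [Finsupp.single_apply, if_neg]
      intro hcon
      exact hne (congrArg Sigma.fst hcon)
  -- compute phiS on the monomial
  have hphi : phiS K dx dy (monomial mz (1 : K)) =
      (monomial mx' (1 : K)) ⊗ₜ[K] (monomial my (1 : K)) := by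
    rw [phiS, aeval_monomial, map_one, one_mul]
    rw [Finsupp.prod_fintype _ _ (fun s => pow_zero _)]
    simp_rw [Algebra.TensorProduct.tmul_pow]
    rw [tmul_prod_eq, prod_X_pow_eq_monomial', prod_X_pow_eq_monomial', hxmarg, hymarg]
  refine ⟨mz, ?_⟩
  rw [psiTFP, AlgHom.comp_apply, hphi, Algebra.TensorProduct.map_tmul]
  have hquot : Ideal.Quotient.mk (toricIdeal K
        (fun s : Σ α : Fin d, Fin (dx α) => b s.1 s.2)) (monomial mx (1 : K)) =
      Ideal.Quotient.mk _ (monomial mx' (1 : K)) := by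
    rw [Ideal.Quotient.eq]
    apply Ideal.subset_span
    refine ⟨mx, mx', ?_, rfl⟩
    have : ∀ s : Σ α : Fin d, Fin (dx α),
        ((mx s : ℤ) - (mx' s : ℤ)) • b s.1 s.2 = mx s • b s.1 s.2 - mx' s • b s.1 s.2 := by
      intro s
      rw [sub_smul, natCast_zsmul, natCast_zsmul]
    rw [Finset.sum_congr rfl fun s _ => this s, Finset.sum_sub_distrib, hbeq, sub_self]
  rw [graverGen, Ideal.Quotient.mkₐ_eq_mk, Ideal.Quotient.mkₐ_eq_mk, hquot]
end
end
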